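/- arXiv:2306.14665 — 2 statements merged into one kernel-verified Lean document; each statement's English description precedes it below -/
import Mathlib

section
/- Let F be real-valued and C^∞ on a neighborhood of the annulus A = {1/2 ≤ |ξ| ≤ 2} in ℝⁿ, with |∇F(ξ)| ≥ M > 0 on A and |∂^α F(ξ)| ≤ C_α M on A for all 2 ≤ |α| ≤ N+1. Define G_ℓ = ∂_{ξ_ℓ}F/|∇F|². Then for every multi-index α with |α| ≤ N there exists a constant C (depending only on n, N, and the C_α) such that |∂^α G_ℓ(ξ)| ≤ C M^{-1} for all ξ ∈ A and ℓ = 1,…,n. -/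
open MeasureTheory Real Set

abbrev Euc (n : ℕ) := EuclideanSpace ℝ (Fin n)

set_option maxHeartbeats 4000000 in
theorem stmt14
    (n : ℕ) (N : ℕ) (Cd : ℕ → ℝ) :
    ∃ C : ℝ, 0 < C ∧
      ∀ (F : Euc n → ℝ) (V : Set (Euc n)) (M : ℝ), 0 < M → IsOpen V →
        {ξ : Euc n | 1/2 ≤ ‖ξ‖ ∧ ‖ξ‖ ≤ 2} ⊆ V →
        ContDiffOn ℝ (⊤ : ℕ∞) F V →
        (∀ ξ : Euc n, 1/2 ≤ ‖ξ‖ → ‖ξ‖ ≤ 2 → M ≤ ‖gradient F ξ‖) →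
        (∀ k : ℕ, 2 ≤ k → k ≤ N + 1 → ∀ ξ : Euc n, 1/2 ≤ ‖ξ‖ → ‖ξ‖ ≤ 2 →
          ‖iteratedFDeriv ℝ k F ξ‖ ≤ Cd k * M) →
        ∀ ξ : Euc n, 1/2 ≤ ‖ξ‖ → ‖ξ‖ ≤ 2 → ∀ ℓ : Fin n, ∀ k : ℕ, k ≤ N →
          ‖iteratedFDeriv ℝ k
              (fun ζ : Euc n =>
                fderiv ℝ F ζ (EuclideanSpace.single ℓ (1 : ℝ)) / ‖gradient F ζ‖ ^ 2) ξ‖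
            ≤ C / M := by
  classical
  have hk' : ∀ m : ℕ, (m : WithTop ℕ∞) ≤ ((⊤:ℕ∞) : WithTop ℕ∞) := fun m => by
    exact_mod_cast le_top
  -- constants
  set Cdm : ℝ := (∑ k ∈ Finset.range (N + 2), |Cd k|) + 1 with hCdm_def
  have hCdm1 : (1:ℝ) ≤ Cdm := by
    have h0 : (0:ℝ) ≤ ∑ k ∈ Finset.range (N + 2), |Cd k| :=
      Finset.sum_nonneg fun _ _ => abs_nonneg _
    rw [hCdm_def]; linarith
  have hCdm0 : (0:ℝ) < Cdm := lt_of_lt_of_le one_pos hCdm1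
  have hCdle : ∀ m : ℕ, m ≤ N + 1 → Cd m ≤ Cdm := by
    intro m hm
    have h1 : Cd m ≤ |Cd m| := le_abs_self _
    have h2 : |Cd m| ≤ ∑ k ∈ Finset.range (N + 2), |Cd k| :=
      Finset.single_le_sum (f := fun k => |Cd k|) (fun _ _ => abs_nonneg _)
        (Finset.mem_range.2 (by omega))
    rw [hCdm_def]; linarith
  set B0 : ℝ := 2 ^ N * Cdm ^ 2 with hB0_def
  have hB00 : 0 < B0 := by rw [hB0_def]; positivity
  set D : ℝ := max 1 B0 with hD_def
  have hD1 : (1:ℝ) ≤ D := le_max_left _ _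
  have hD0 : (0:ℝ) < D := lt_of_lt_of_le one_pos hD1
  set Kinv : ℝ := (Nat.factorial N : ℝ) * 3 ^ (N + 1) with hKinv_def
  have hKinv0 : 0 < Kinv := by
    rw [hKinv_def]
    have := Nat.factorial_pos N
    positivity
  set K1 : ℝ := (Nat.factorial N : ℝ) * Kinv * D ^ N with hK1_def
  have hK10 : 0 < K1 := by
    rw [hK1_def]
    exact mul_pos (mul_pos (by exact_mod_cast Nat.factorial_pos N) hKinv0) (pow_pos hD0 N)
  refine ⟨2 ^ N * Cdm * K1, by positivity, ?_⟩
  intro F V M hM hV hVA hF hgrad hder ξ hξ1 hξ2 ℓ k hk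
  have hξV : ξ ∈ V := hVA ⟨hξ1, hξ2⟩
  set L : ℝ := ‖gradient F ξ‖ with hL_def
  have hML : M ≤ L := hgrad ξ hξ1 hξ2
  have hL0 : (0:ℝ) < L := lt_of_lt_of_le hM hML
  have hML0 : (0:ℝ) < M * L := mul_pos hM hL0
  set g : Euc n → Euc n := fun ζ => gradient F ζ with hg_def
  set h : Euc n → ℝ := fun ζ => ‖gradient F ζ‖ ^ 2 with hh_def
  have hgrad_eq : g = ⇑(InnerProductSpace.toDual ℝ (Euc n)).symm ∘ (fderiv ℝ F) := rfl
  -- smoothness on V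
  have hdF : ContDiffOn ℝ (⊤:ℕ∞) (fderiv ℝ F) V := hF.fderiv_of_isOpen hV (le_of_eq rfl)
  have hgV : ContDiffOn ℝ (⊤:ℕ∞) g V := by
    rw [hgrad_eq]
    exact (InnerProductSpace.toDual ℝ (Euc n)).symm.contDiff.comp_contDiffOn hdF
  have hhV : ContDiffOn ℝ (⊤:ℕ∞) h V := hgV.norm_sq (𝕜 := ℝ)
  -- the good open set s
  set s : Set (Euc n) := V ∩ h ⁻¹' (Ioi (M * L / 3)) with hs_def
  have hsopen : IsOpen s := hhV.continuousOn.isOpen_inter_preimage hV isOpen_Ioi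
  have hsu : UniqueDiffOn ℝ s := hsopen.uniqueDiffOn
  have hξs : ξ ∈ s := by
    refine ⟨hξV, ?_⟩
    simp only [mem_preimage, mem_Ioi, hh_def]
    nlinarith
  have hsV : s ⊆ V := inter_subset_left
  have hFs : ContDiffOn ℝ (⊤:ℕ∞) F s := hF.mono hsV
  have hdFs : ContDiffOn ℝ (⊤:ℕ∞) (fderiv ℝ F) s := hdF.mono hsV
  have hgs : ContDiffOn ℝ (⊤:ℕ∞) g s := hgV.mono hsV
  have hhs : ContDiffOn ℝ (⊤:ℕ∞) h s := hhV.mono hsV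
  have hhpos : ∀ ζ ∈ s, M * L / 3 < h ζ := fun ζ hζ => hζ.2
  -- derivative bounds for F within s at ξ
  have hFd : ∀ m : ℕ, 2 ≤ m → m ≤ N + 1 →
      ‖iteratedFDerivWithin ℝ m F s ξ‖ ≤ Cdm * M := by
    intro m h2 hN1
    rw [iteratedFDerivWithin_of_isOpen m hsopen hξs]
    exact (hder m h2 hN1 ξ hξ1 hξ2).trans (mul_le_mul_of_nonneg_right (hCdle m hN1) hM.le)
  have hdFd : ∀ r : ℕ, ‖iteratedFDerivWithin ℝ r (fderiv ℝ F) s ξ‖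
      = ‖iteratedFDerivWithin ℝ (r+1) F s ξ‖ := by
    intro r
    have heq : EqOn (fderiv ℝ F) (fderivWithin ℝ F s) s :=
      fun ζ hζ => (fderivWithin_of_isOpen hsopen hζ).symm
    rw [iteratedFDerivWithin_congr heq hξs r]
    exact norm_iteratedFDerivWithin_fderivWithin hsu hξs
  have hgd0 : ‖iteratedFDerivWithin ℝ 0 g s ξ‖ = L := by
    rw [norm_iteratedFDerivWithin_zero]
  have hgd : ∀ r : ℕ, 1 ≤ r → r ≤ N →
      ‖iteratedFDerivWithin ℝ r g s ξ‖ ≤ Cdm * M := by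
    intro r h1 hrN
    have e1 : ‖iteratedFDerivWithin ℝ r g s ξ‖
        = ‖iteratedFDerivWithin ℝ r (fderiv ℝ F) s ξ‖ := by
      rw [hgrad_eq]
      exact (InnerProductSpace.toDual ℝ (Euc n)).symm.norm_iteratedFDerivWithin_comp_left
        (fderiv ℝ F) hsu hξs r
    rw [e1, hdFd r]
    exact hFd (r+1) (by omega) (by omega)
  -- bound for derivatives of h
  have hhd : ∀ m : ℕ, 1 ≤ m → m ≤ N →
      ‖iteratedFDerivWithin ℝ m h s ξ‖ ≤ B0 * (M * L) := by
    intro m hm1 hmN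
    have hhinner : h = fun ζ => (innerSL ℝ) (g ζ) (g ζ) := by
      funext ζ
      simp only [hh_def, hg_def, innerSL_apply_apply]
      exact (real_inner_self_eq_norm_sq _).symm
    have hbil := (innerSL ℝ).norm_iteratedFDerivWithin_le_of_bilinear hgs hgs hsu hξs (hk' m)
    rw [← hhinner] at hbil
    refine hbil.trans ?_
    have key : ∀ i ∈ Finset.range (m+1),
        (m.choose i : ℝ) * ‖iteratedFDerivWithin ℝ i g s ξ‖ *
          ‖iteratedFDerivWithin ℝ (m-i) g s ξ‖
        ≤ (m.choose i : ℝ) * (Cdm ^ 2 * (M * L)) := by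
      intro i hi
      rw [Finset.mem_range] at hi
      have him : i ≤ m := by omega
      have hprod : ‖iteratedFDerivWithin ℝ i g s ξ‖ *
          ‖iteratedFDerivWithin ℝ (m-i) g s ξ‖ ≤ Cdm ^ 2 * (M * L) := by
        rcases Nat.eq_zero_or_pos i with rfl | hipos
        · have h2 := hgd m hm1 hmN
          rw [Nat.sub_zero, hgd0]
          calc L * ‖iteratedFDerivWithin ℝ m g s ξ‖ ≤ L * (Cdm * M) :=
                mul_le_mul_of_nonneg_left h2 hL0.le
            _ ≤ Cdm ^ 2 * (M * L) := by nlinarith [mul_nonneg hCdm0.le (mul_nonneg (mul_nonneg (sub_nonneg.2 hCdm1) hM.le) hL0.le)]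
        · have h1 := hgd i hipos (le_trans him hmN)
          have h2 : ‖iteratedFDerivWithin ℝ (m-i) g s ξ‖ ≤ Cdm * L := by
            rcases Nat.eq_zero_or_pos (m - i) with hz | hpos
            · rw [hz, hgd0]; nlinarith
            · exact (hgd (m-i) hpos (le_trans (Nat.sub_le _ _) hmN)).trans
                (by nlinarith [mul_pos hCdm0 hM])
          have hmul := mul_le_mul h1 h2 (norm_nonneg _) (mul_nonneg hCdm0.le hM.le)
          nlinarith [mul_pos hM hL0]
      rw [mul_assoc]
      exact mul_le_mul_of_nonneg_left hprod (Nat.cast_nonneg _)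
    calc ‖innerSL ℝ (E := Euc n)‖ * ∑ i ∈ Finset.range (m + 1), (m.choose i : ℝ) *
          ‖iteratedFDerivWithin ℝ i g s ξ‖ * ‖iteratedFDerivWithin ℝ (m - i) g s ξ‖
        ≤ 1 * ∑ i ∈ Finset.range (m + 1), (m.choose i : ℝ) * (Cdm ^ 2 * (M * L)) := by
          apply mul_le_mul (norm_innerSL_le ℝ) (Finset.sum_le_sum key) ?_ zero_le_one
          · apply Finset.sum_nonneg
            intro i _
            have := norm_nonneg (iteratedFDerivWithin ℝ i g s ξ)
            have := norm_nonneg (iteratedFDerivWithin ℝ (m - i) g s ξ)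
            have : (0:ℝ) ≤ (m.choose i : ℝ) := Nat.cast_nonneg _
            positivity
      _ = (2:ℝ) ^ m * (Cdm ^ 2 * (M * L)) := by
          rw [one_mul, ← Finset.sum_mul]
          congr 1
          rw_mod_cast [Nat.sum_range_choose]
      _ ≤ B0 * (M * L) := by
          rw [hB0_def]
          have h2m : (2:ℝ) ^ m ≤ 2 ^ N := by
            apply pow_le_pow_right₀ (by norm_num) hmN
          have hX : (0:ℝ) ≤ Cdm ^ 2 * (M * L) := by nlinarith [mul_pos hM hL0]
          nlinarith [mul_pos hM hL0, pow_pos (show (0:ℝ)<2 by norm_num) m]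
  -- the rescaled function and composition with inv
  set hb : Euc n → ℝ := (M*L)⁻¹ • h with hhb_def
  have hbs : ContDiffOn ℝ (⊤:ℕ∞) hb s := by rw [hhb_def]; exact hhs.const_smul ((M*L)⁻¹ : ℝ)
  set t : Set ℝ := Ioi (3⁻¹ : ℝ) with ht_def
  have hmap : MapsTo hb s t := by
    intro ζ hζ
    have h3 := hhpos ζ hζ
    simp only [hhb_def, Pi.smul_apply, smul_eq_mul, ht_def, mem_Ioi]
    rw [show (3:ℝ)⁻¹ = (M*L)⁻¹ * (M * L / 3) by field_simp]
    exact mul_lt_mul_of_pos_left h3 (inv_pos.2 hML0)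
  have hbd : ∀ i : ℕ, 1 ≤ i → i ≤ N →
      ‖iteratedFDerivWithin ℝ i hb s ξ‖ ≤ D ^ i := by
    intro i h1 hiN
    rw [hhb_def, iteratedFDerivWithin_const_smul_apply (hhs.of_le (hk' i) ξ hξs) hsu hξs,
      norm_smul, Real.norm_eq_abs, abs_of_pos (inv_pos.2 hML0)]
    have hle := hhd i h1 hiN
    have e : (M*L)⁻¹ * (B0 * (M*L)) = B0 := by field_simp
    calc (M*L)⁻¹ * ‖iteratedFDerivWithin ℝ i h s ξ‖ ≤ (M*L)⁻¹ * (B0 * (M*L)) :=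
          mul_le_mul_of_nonneg_left hle (inv_pos.2 hML0).le
      _ = B0 := e
      _ ≤ D := le_max_right _ _
      _ ≤ D ^ i := le_self_pow₀ hD1 (by omega)
  have hinvt : ContDiffOn ℝ (⊤:ℕ∞) Inv.inv t := by
    apply (contDiffOn_inv ℝ).mono
    intro x hx
    simp only [ht_def, mem_Ioi] at hx
    simp only [mem_compl_iff, mem_singleton_iff]
    exact ne_of_gt (by nlinarith)
  have hinvd : ∀ i : ℕ, i ≤ N → ∀ y ∈ t, ‖iteratedFDerivWithin ℝ i Inv.inv t y‖ ≤ Kinv := by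
    intro i hi y hy
    have hy3 : (3:ℝ)⁻¹ < y := hy
    have hy0 : (0:ℝ) < y := lt_trans (by norm_num) hy3
    rw [ht_def, iteratedFDerivWithin_of_isOpen i isOpen_Ioi hy,
        norm_iteratedFDeriv_eq_norm_iteratedDeriv, iteratedDeriv_eq_iterate, iter_deriv_inv,
        Real.norm_eq_abs, abs_mul]
    have e1 : |(-1) ^ i * (Nat.factorial i : ℝ)| = (Nat.factorial i : ℝ) := by
      rw [abs_mul, abs_pow, abs_neg, abs_one, one_pow, one_mul, Nat.abs_cast]
    have e2 : |y ^ (-1 - (i:ℤ))| ≤ 3 ^ (i+1) := by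
      rw [abs_of_pos (zpow_pos hy0 _),
        show (-1 - (i:ℤ)) = -((i:ℤ)+1) by ring, zpow_neg,
        show ((i:ℤ)+1) = ((i+1 : ℕ) : ℤ) by push_cast; ring, zpow_natCast]
      rw [inv_le_comm₀ (by positivity) (by positivity)]
      calc ((3:ℝ) ^ (i+1))⁻¹ = (3⁻¹) ^ (i+1) := by rw [inv_pow]
        _ ≤ y ^ (i+1) := pow_le_pow_left₀ (by norm_num) hy3.le _
    calc |(-1) ^ i * (Nat.factorial i : ℝ)| * |y ^ (-1 - (i:ℤ))|
        ≤ (Nat.factorial i : ℝ) * 3 ^ (i+1) := by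
          rw [e1]
          exact mul_le_mul_of_nonneg_left e2 (by positivity)
      _ ≤ Kinv := by
          rw [hKinv_def]
          have f1 : (Nat.factorial i : ℝ) ≤ (Nat.factorial N : ℝ) := by exact_mod_cast Nat.factorial_le hi
          have f2 : (3:ℝ) ^ (i+1) ≤ 3 ^ (N+1) := by
            apply pow_le_pow_right₀ (by norm_num) (by omega)
          have f3 : (0:ℝ) ≤ (Nat.factorial i : ℝ) := by positivity
          nlinarith [pow_pos (show (0:ℝ) < 3 by norm_num) (i+1)]
  have hinvhb : ∀ j : ℕ, j ≤ N →
      ‖iteratedFDerivWithin ℝ j (Inv.inv ∘ hb) s ξ‖ ≤ K1 := by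
    intro j hj
    have hcomp := norm_iteratedFDerivWithin_comp_le (𝕜 := ℝ) hinvt hbs (hk' j)
      isOpen_Ioi.uniqueDiffOn hsu hmap hξs
      (C := Kinv) (D := D)
      (fun i hij => hinvd i (le_trans hij hj) _ (hmap hξs))
      (fun i h1 hij => hbd i h1 (le_trans hij hj))
    refine hcomp.trans ?_
    rw [hK1_def]
    have f1 : (Nat.factorial j : ℝ) ≤ (Nat.factorial N : ℝ) := by exact_mod_cast Nat.factorial_le hj
    have f2 : D ^ j ≤ D ^ N := pow_le_pow_right₀ hD1 hj
    have f3 : (0:ℝ) < D ^ j := pow_pos hD0 j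
    have f4 : (0:ℝ) < (Nat.factorial j : ℝ) := by exact_mod_cast Nat.factorial_pos j
    nlinarith [mul_nonneg (mul_nonneg (sub_nonneg.2 f1) hKinv0.le) f3.le,
      mul_nonneg (mul_nonneg (le_trans f4.le f1) hKinv0.le) (sub_nonneg.2 f2)]
  -- bound on derivatives of h⁻¹
  have hinvs : ContDiffOn ℝ (⊤:ℕ∞) (fun ζ => (h ζ)⁻¹) s :=
    hhs.inv (fun ζ hζ => by nlinarith [hhpos ζ hζ])
  have hinvh : ∀ j : ℕ, j ≤ N →
      ‖iteratedFDerivWithin ℝ j (fun ζ => (h ζ)⁻¹) s ξ‖ ≤ (M*L)⁻¹ * K1 := by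
    intro j hj
    have hfe : (fun ζ : Euc n => (h ζ)⁻¹) = (M*L)⁻¹ • (Inv.inv ∘ hb) := by
      funext ζ
      simp only [Pi.smul_apply, Function.comp_apply, hhb_def, smul_eq_mul]
      rcases eq_or_ne (h ζ) 0 with hz | hz
      · simp [hz]
      · field_simp
    have hcs : ContDiffOn ℝ (⊤:ℕ∞) (Inv.inv ∘ hb) s :=
      hinvt.comp hbs (fun ζ hζ => hmap hζ)
    rw [hfe, iteratedFDerivWithin_const_smul_apply (hcs.of_le (hk' j) ξ hξs) hsu hξs,
      norm_smul, Real.norm_eq_abs, abs_of_pos (inv_pos.2 hML0)]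
    exact mul_le_mul_of_nonneg_left (hinvhb j hj) (inv_pos.2 hML0).le
  -- numerator bounds
  set u : Euc n → ℝ := fun ζ => fderiv ℝ F ζ (EuclideanSpace.single ℓ (1:ℝ)) with hu_def
  have hus : ContDiffOn ℝ (⊤:ℕ∞) u s := hdFs.clm_apply contDiffOn_const
  have hnorm_single : ‖EuclideanSpace.single ℓ (1:ℝ)‖ = 1 := by
    rw [EuclideanSpace.norm_single]; norm_num
  have hLfd : ‖fderiv ℝ F ξ‖ = L := by
    rw [hL_def]
    have : gradient F ξ = (InnerProductSpace.toDual ℝ (Euc n)).symm (fderiv ℝ F ξ) := rfl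
    rw [this, LinearIsometryEquiv.norm_map]
  have hu0 : ‖iteratedFDerivWithin ℝ 0 u s ξ‖ ≤ L := by
    rw [norm_iteratedFDerivWithin_zero]
    calc ‖u ξ‖ ≤ ‖fderiv ℝ F ξ‖ * ‖EuclideanSpace.single ℓ (1:ℝ)‖ :=
          (fderiv ℝ F ξ).le_opNorm _
      _ = L := by rw [hnorm_single, mul_one, hLfd]
  have hui : ∀ i : ℕ, 1 ≤ i → i ≤ N →
      ‖iteratedFDerivWithin ℝ i u s ξ‖ ≤ Cdm * M := by
    intro i h1 hiN
    have happ := norm_iteratedFDerivWithin_clm_apply_const (c := EuclideanSpace.single ℓ (1:ℝ))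
      (hdFs ξ hξs) hsu hξs (hk' i)
    rw [hnorm_single, one_mul] at happ
    refine happ.trans ?_
    rw [hdFd i]
    exact hFd (i+1) (by omega) (by omega)
  -- final assembly
  have hgoal_fun : (fun ζ : Euc n =>
        fderiv ℝ F ζ (EuclideanSpace.single ℓ (1:ℝ)) / ‖gradient F ζ‖ ^ 2)
      = fun ζ => u ζ * (h ζ)⁻¹ := by
    funext ζ
    rw [div_eq_mul_inv]
  rw [hgoal_fun, ← iteratedFDerivWithin_of_isOpen k hsopen hξs]
  have hmul := norm_iteratedFDerivWithin_mul_le (𝕜 := ℝ) hus hinvs hsu hξs (hk' k)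
  refine hmul.trans ?_
  have hterm : ∀ i ∈ Finset.range (k+1),
      (k.choose i : ℝ) * ‖iteratedFDerivWithin ℝ i u s ξ‖ *
        ‖iteratedFDerivWithin ℝ (k-i) (fun ζ => (h ζ)⁻¹) s ξ‖
      ≤ (k.choose i : ℝ) * (Cdm * K1 / M) := by
    intro i hi
    rw [Finset.mem_range] at hi
    have hki : k - i ≤ N := le_trans (Nat.sub_le _ _) hk
    have hIB := hinvh (k-i) hki
    have hIB0 : (0:ℝ) ≤ ‖iteratedFDerivWithin ℝ (k-i) (fun ζ => (h ζ)⁻¹) s ξ‖ := norm_nonneg _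
    have hprod : ‖iteratedFDerivWithin ℝ i u s ξ‖ *
        ‖iteratedFDerivWithin ℝ (k-i) (fun ζ => (h ζ)⁻¹) s ξ‖ ≤ Cdm * K1 / M := by
      rcases Nat.eq_zero_or_pos i with rfl | hipos
      · have e : L * ((M*L)⁻¹ * K1) = K1 / M := by field_simp
        calc ‖iteratedFDerivWithin ℝ 0 u s ξ‖ *
              ‖iteratedFDerivWithin ℝ (k-0) (fun ζ => (h ζ)⁻¹) s ξ‖
            ≤ L * ((M*L)⁻¹ * K1) := mul_le_mul hu0 hIB hIB0 hL0.le
          _ = K1 / M := e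
          _ ≤ Cdm * K1 / M := by gcongr; nlinarith [hK10]
      · have hu' := hui i hipos (le_trans (by omega) hk)
        calc ‖iteratedFDerivWithin ℝ i u s ξ‖ *
              ‖iteratedFDerivWithin ℝ (k-i) (fun ζ => (h ζ)⁻¹) s ξ‖
            ≤ (Cdm * M) * ((M*L)⁻¹ * K1) :=
              mul_le_mul hu' hIB hIB0 (mul_nonneg hCdm0.le hM.le)
          _ = Cdm * K1 / L := by field_simp
          _ ≤ Cdm * K1 / M := by gcongr
    rw [mul_assoc]
    exact mul_le_mul_of_nonneg_left hprod (Nat.cast_nonneg _)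
  calc ∑ i ∈ Finset.range (k + 1), (k.choose i : ℝ) *
        ‖iteratedFDerivWithin ℝ i u s ξ‖ *
        ‖iteratedFDerivWithin ℝ (k - i) (fun ζ => (h ζ)⁻¹) s ξ‖
      ≤ ∑ i ∈ Finset.range (k + 1), (k.choose i : ℝ) * (Cdm * K1 / M) :=
        Finset.sum_le_sum hterm
    _ = (2:ℝ) ^ k * (Cdm * K1 / M) := by
        rw [← Finset.sum_mul]
        congr 1
        rw_mod_cast [Nat.sum_range_choose]
    _ ≤ 2 ^ N * Cdm * K1 / M := by
        have h2 : (2:ℝ) ^ k ≤ 2 ^ N := by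
          apply pow_le_pow_right₀ (by norm_num) hk
        rw [show (2:ℝ)^N * Cdm * K1 / M = 2^N * (Cdm * K1 / M) by ring]
        have : (0:ℝ) ≤ Cdm * K1 / M := by
          apply div_nonneg (mul_nonneg hCdm0.le hK10.le) hM.le
        exact mul_le_mul_of_nonneg_right h2 this
end

section
/- Let K : ℝⁿ × ℝⁿ → ℂ be C¹ in the second variable with sup_y ‖∂_y^α K(·, y)‖_{L²_x} ≤ M for all |α| = 1. Let f ∈ L^∞(ℝⁿ) be supported in {|y − ȳ| ≤ r} with ‖f‖_{L^∞} ≤ r^{-n} and ∫ f(y) dy = 0, and define Tf(x) = ∫ f(y) K(x,y) dy. Then ‖Tf‖_{L²} ≤ C_n M r, where C_n depends only on n. -/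
open MeasureTheory Real Set
open scoped ENNReal NNReal

/-- Minkowski's integral inequality in `ℝ≥0∞`, `p = 2`. -/
lemma mink2 {X Y : Type*} [MeasurableSpace X] [MeasurableSpace Y]
    (μ : Measure X) (ν : Measure Y) [SFinite μ] [SFinite ν]
    {F : X → Y → ℝ≥0∞} (hF : Measurable (Function.uncurry F)) :
    (∫⁻ x, (∫⁻ y, F x y ∂ν) ^ (2:ℝ) ∂μ) ^ (1/2:ℝ)
      ≤ ∫⁻ y, (∫⁻ x, (F x y) ^ (2:ℝ) ∂μ) ^ (1/2:ℝ) ∂ν := by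
  set A : Y → ℝ≥0∞ := fun y => (∫⁻ x, (F x y) ^ (2:ℝ) ∂μ) ^ (1/2:ℝ) with hA
  have hFx : ∀ x, Measurable (F x) := fun x => hF.comp (measurable_prodMk_left)
  have hFy : ∀ y, Measurable (fun x => F x y) :=
    fun y => hF.comp (measurable_prodMk_right)
  have hrp : Continuous fun x : ℝ≥0∞ => x ^ (2:ℝ) := ENNReal.continuous_rpow_const
  have hrp2 : Continuous fun x : ℝ≥0∞ => x ^ (1/2:ℝ) := ENNReal.continuous_rpow_const
  have hAmeas : Measurable A := by
    apply hrp2.measurable.comp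
    apply Measurable.lintegral_prod_right
    exact hrp.measurable.comp (hF.comp measurable_swap)
  have key : ∫⁻ x, (∫⁻ y, F x y ∂ν) ^ (2:ℝ) ∂μ ≤ (∫⁻ y, A y ∂ν) ^ (2:ℝ) := by
    have e1 : ∀ x, (∫⁻ y, F x y ∂ν) ^ (2:ℝ) = ∫⁻ y, ∫⁻ z, F x y * F x z ∂ν ∂ν := by
      intro x
      rw [ENNReal.rpow_two, sq, lintegral_lintegral_mul (hFx x).aemeasurable (hFx x).aemeasurable]
    simp_rw [e1]
    have m1 : Measurable (Function.uncurry fun (p : X × Y) (z : Y) => F p.1 p.2 * F p.1 z) := by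
      apply Measurable.mul
      · exact hF.comp ((measurable_fst.comp measurable_fst).prodMk
          (measurable_snd.comp measurable_fst))
      · exact hF.comp ((measurable_fst.comp measurable_fst).prodMk measurable_snd)
    have swap1 : ∫⁻ x, ∫⁻ y, ∫⁻ z, F x y * F x z ∂ν ∂ν ∂μ
        = ∫⁻ y, ∫⁻ x, ∫⁻ z, F x y * F x z ∂ν ∂μ ∂ν := by
      apply lintegral_lintegral_swap
      exact (m1.lintegral_prod_right).aemeasurable
    rw [swap1]
    have swap2 : ∀ y, ∫⁻ x, ∫⁻ z, F x y * F x z ∂ν ∂μ = ∫⁻ z, ∫⁻ x, F x y * F x z ∂μ ∂ν := by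
      intro y
      apply lintegral_lintegral_swap
      exact ((hF.comp (measurable_fst.prodMk (measurable_const))).mul
        (hF.comp (measurable_fst.prodMk measurable_snd))).aemeasurable
    simp_rw [swap2]
    have cs : ∀ y z, ∫⁻ x, F x y * F x z ∂μ ≤ A y * A z := by
      intro y z
      have := ENNReal.lintegral_mul_le_Lp_mul_Lq μ
        (Real.holderConjugate_iff_eq_conjExponent (by norm_num) |>.2 (by norm_num) :
          Real.HolderConjugate 2 2) (hFy y).aemeasurable (hFy z).aemeasurable
      simpa [A, one_div] using this
    calc ∫⁻ y, ∫⁻ z, ∫⁻ x, F x y * F x z ∂μ ∂ν ∂ν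
        ≤ ∫⁻ y, ∫⁻ z, A y * A z ∂ν ∂ν :=
          lintegral_mono fun y => lintegral_mono fun z => cs y z
      _ = (∫⁻ y, A y ∂ν) ^ (2:ℝ) := by
          rw [ENNReal.rpow_two, sq,
            ← lintegral_lintegral_mul hAmeas.aemeasurable hAmeas.aemeasurable]
  calc (∫⁻ x, (∫⁻ y, F x y ∂ν) ^ (2:ℝ) ∂μ) ^ (1/2:ℝ)
      ≤ ((∫⁻ y, A y ∂ν) ^ (2:ℝ)) ^ (1/2:ℝ) := ENNReal.rpow_le_rpow key (by norm_num)
    _ = ∫⁻ y, A y ∂ν := by rw [← ENNReal.rpow_mul]; norm_num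

/-- Joint measurability of the directional derivative in the second variable. -/
lemma meas_dirderiv {n : ℕ} {K : Euc n → Euc n → ℂ}
    (hK : Continuous fun p : Euc n × Euc n => K p.1 p.2)
    (hK1 : ∀ x, ContDiff ℝ 1 (K x)) (v : Euc n) :
    Measurable fun p : Euc n × Euc n => fderiv ℝ (K p.1) p.2 v := by
  set F : ℕ → (Euc n × Euc n) → ℂ := fun k p =>
    (((k:ℝ)+1)⁻¹)⁻¹ • (K p.1 (p.2 + ((k:ℝ)+1)⁻¹ • v) - K p.1 p.2) with hFdef
  have hmeas : ∀ k, Measurable (F k) := by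
    intro k
    simp only [hFdef]
    apply Measurable.fun_const_smul
    apply Measurable.fun_sub
    · exact (hK.comp (continuous_fst.prodMk
        (continuous_snd.add continuous_const))).measurable
    · exact hK.measurable
  have lim : Filter.Tendsto F Filter.atTop (nhds fun p => fderiv ℝ (K p.1) p.2 v) := by
    rw [tendsto_pi_nhds]
    intro p
    have hd : HasDerivAt (fun t : ℝ => K p.1 (p.2 + t • v)) (fderiv ℝ (K p.1) p.2 v) 0 := by
      have hf : HasFDerivAt (K p.1) (fderiv ℝ (K p.1) p.2) (p.2 + (0:ℝ) • v) := by
        simpa using (((hK1 p.1).differentiable one_ne_zero) p.2).hasFDerivAt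
      have hl : HasDerivAt (fun t : ℝ => p.2 + t • v) v (0:ℝ) := by
        simpa using ((hasDerivAt_id (0:ℝ)).smul_const v).const_add p.2
      exact hf.comp_hasDerivAt (0:ℝ) hl
    have hslope := hasDerivAt_iff_tendsto_slope.1 hd
    have hseq : Filter.Tendsto (fun k : ℕ => ((k:ℝ)+1)⁻¹) Filter.atTop
        (nhdsWithin 0 {(0:ℝ)}ᶜ) := by
      apply tendsto_nhdsWithin_of_tendsto_nhds_of_eventually_within
      · exact tendsto_one_div_add_atTop_nhds_zero_nat.congr fun k => one_div _
      · filter_upwards with k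
        simp only [mem_compl_iff, mem_singleton_iff]
        positivity
    have := hslope.comp hseq
    convert this using 2 with k
    rw [hFdef]
    simp only [Function.comp_apply, slope_def_module]
    simp
  exact measurable_of_tendsto_metrizable hmeas lim

lemma euc_decomp {n : ℕ} (L : Euc n →L[ℝ] ℂ) (u : Euc n) :
    L u = ∑ ℓ : Fin n, (u ℓ) • L (EuclideanSpace.single ℓ (1:ℝ)) := by
  have h : u = ∑ ℓ : Fin n, (u ℓ) • EuclideanSpace.single ℓ (1:ℝ) := by
    ext i
    have h2 : (∑ ℓ : Fin n, (u ℓ) • EuclideanSpace.single ℓ (1:ℝ)) i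
        = ∑ ℓ : Fin n, ((u ℓ) • EuclideanSpace.single ℓ (1:ℝ)) i :=
      by rw [WithLp.ofLp_sum, Finset.sum_apply]
    rw [h2]
    simp [EuclideanSpace.single_apply]
  conv_lhs => rw [h]
  rw [map_sum]
  simp [_root_.map_smul]

lemma euc_abs_le {n : ℕ} (u : Euc n) (ℓ : Fin n) : |u ℓ| ≤ ‖u‖ := by
  rw [EuclideanSpace.norm_eq, Real.le_sqrt (abs_nonneg _)]
  calc |u ℓ| ^ 2 = ‖u ℓ‖ ^ 2 := by rw [Real.norm_eq_abs]
    _ ≤ ∑ i, ‖u i‖ ^ 2 := Finset.single_le_sum (f := fun i => ‖u i‖^2) (fun i _ => sq_nonneg _) (Finset.mem_univ ℓ)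
  positivity

lemma measurable_prod4 {α β γ δ ε : Type*} [MeasurableSpace α] [MeasurableSpace β]
    [MeasurableSpace γ] [MeasurableSpace δ] [MeasurableSpace ε]
    [Countable δ] [MeasurableSingletonClass δ]
    {F : α × β × γ × δ → ε}
    (h : ∀ ℓ : δ, Measurable fun q : α × β × γ => F (q.1, q.2.1, q.2.2, ℓ)) :
    Measurable F := by
  have hH : Measurable fun q : (α × β × γ) × δ => F (q.1.1, q.1.2.1, q.1.2.2, q.2) :=
    measurable_from_prod_countable_left fun ℓ => h ℓ
  have hre : Measurable fun p : α × β × γ × δ => ((p.1, p.2.1, p.2.2.1), p.2.2.2) :=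
    (measurable_fst.prodMk (measurable_snd.fst.prodMk
      measurable_snd.snd.fst)).prodMk measurable_snd.snd.snd
  exact hH.comp hre

lemma measurable_prod3 {α β γ ε : Type*} [MeasurableSpace α] [MeasurableSpace β]
    [MeasurableSpace γ] [MeasurableSpace ε] [Countable γ] [MeasurableSingletonClass γ]
    {F : α × β × γ → ε}
    (h : ∀ ℓ : γ, Measurable fun q : α × β => F (q.1, q.2, ℓ)) :
    Measurable F := by
  have hH : Measurable fun q : (α × β) × γ => F (q.1.1, q.1.2, q.2) :=
    measurable_from_prod_countable_left fun ℓ => h ℓ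
  have hre : Measurable fun p : α × β × γ => ((p.1, p.2.1), p.2.2) :=
    (measurable_fst.prodMk measurable_snd.fst).prodMk measurable_snd.snd
  exact hH.comp hre
set_option maxHeartbeats 1000000 in
theorem stmt17 (n : ℕ) (hn : 1 ≤ n) :
    ∃ C : ℝ, 0 < C ∧
      ∀ (K : Euc n → Euc n → ℂ) (M : ℝ), 0 ≤ M →
        Continuous (fun p : Euc n × Euc n => K p.1 p.2) →
        (∀ x : Euc n, ContDiff ℝ 1 (K x)) →
        (∀ (ℓ : Fin n) (y : Euc n),
          eLpNorm (fun x : Euc n => fderiv ℝ (K x) y (EuclideanSpace.single ℓ (1 : ℝ)))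
              2 volume ≤ ENNReal.ofReal M) →
        ∀ (f : Euc n → ℂ) (ybar : Euc n) (r : ℝ), 0 < r →
          Measurable f →
          Function.support f ⊆ {y : Euc n | ‖y - ybar‖ ≤ r} →
          (∀ y : Euc n, ‖f y‖ ≤ r ^ (-(n : ℝ))) →
          (∫ y : Euc n, f y) = 0 →
          eLpNorm (fun x : Euc n => ∫ y : Euc n, f y * K x y) 2 volume
            ≤ ENNReal.ofReal (C * M * r) := by
  classical
  refine ⟨n * (volume (Metric.ball (0:Euc n) 1)).toReal + 1, by positivity, ?_⟩
  intro K M hM hKc hKd hKder f ybar r hr hfm hsupp hfb hfint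
  set e : Fin n → Euc n := fun ℓ => EuclideanSpace.single ℓ (1:ℝ) with he
  set c : Euc n → ℝ → Euc n := fun y t => ybar + t • (y - ybar) with hc
  set ν : Measure ℝ := volume.restrict (Ioc (0:ℝ) 1) with hν
  set ρ : Measure (Euc n × ℝ × Fin n) :=
    (volume : Measure (Euc n)).prod (ν.prod Measure.count) with hρ
  set G : Euc n → Euc n × ℝ × Fin n → ℝ≥0∞ := fun x ω =>
    (‖f ω.1‖₊ : ℝ≥0∞) * ((‖(ω.1 - ybar) ω.2.2‖₊ : ℝ≥0∞) *
      (‖fderiv ℝ (K x) (c ω.1 ω.2.1) (e ω.2.2)‖₊ : ℝ≥0∞)) with hG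
  have hKx : ∀ x, Continuous (K x) := fun x => hKc.comp (Continuous.prodMk_right x)
  have hD : ∀ v, Measurable fun p : Euc n × Euc n => fderiv ℝ (K p.1) p.2 v :=
    fun v => meas_dirderiv hKc hKd v
  have hccont : Continuous fun q : Euc n × ℝ => c q.1 q.2 := by
    apply continuous_const.add
    exact continuous_snd.smul (continuous_fst.sub continuous_const)
  set S : Set (Euc n) := Metric.closedBall ybar r with hS
  have hsupp' : Function.support f ⊆ S := by
    intro y hy
    have := hsupp hy
    simpa [hS, Metric.mem_closedBall, dist_eq_norm] using this
  have hGm : Measurable (Function.uncurry G) := by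
    apply measurable_prod4
    intro ℓ
    simp only [hG, Function.uncurry_apply_pair]
    apply Measurable.fun_mul
    · exact (hfm.comp measurable_snd.fst).nnnorm.coe_nnreal_ennreal
    · apply Measurable.fun_mul
      · apply Measurable.coe_nnreal_ennreal
        apply Measurable.nnnorm
        exact (PiLp.continuous_apply 2 (fun _ : Fin n => ℝ) ℓ |>.comp ((continuous_snd.fst.sub continuous_const))).measurable
      · apply Measurable.coe_nnreal_ennreal
        apply Measurable.nnnorm
        exact (hD (e ℓ)).comp
          (measurable_fst.prodMk (hccont.measurable.comp measurable_snd))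
  have claim1 : ∀ x, (‖∫ y, f y * K x y‖₊ : ℝ≥0∞) ≤ ∫⁻ ω, G x ω ∂ρ := by
    intro x
    have hKxc : Continuous (K x) := hKx x
    have hfi : Integrable f := by
      rw [← integrableOn_iff_integrable_of_support_subset hsupp']
      apply Measure.integrableOn_of_bounded measure_closedBall_lt_top.ne
        hfm.aestronglyMeasurable
      exact ae_of_all _ fun y => hfb y
    obtain ⟨B, hB⟩ := (isCompact_closedBall ybar r).exists_bound_of_continuousOn
      hKxc.continuousOn
    have hfKi : Integrable fun y => f y * K x y := by
      rw [← integrableOn_iff_integrable_of_support_subset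
        ((Function.support_mul_subset_left f (K x)).trans hsupp')]
      apply Measure.integrableOn_of_bounded (M := r ^ (-(n:ℝ)) * B)
        measure_closedBall_lt_top.ne (hfm.mul hKxc.measurable).aestronglyMeasurable
      apply (ae_restrict_iff' measurableSet_closedBall).2
      apply ae_of_all
      intro y hy
      rw [Pi.mul_apply, norm_mul]
      exact mul_le_mul (hfb y) (hB y hy) (norm_nonneg _)
        (by positivity)
    have hcancel : ∫ y, f y * K x y = ∫ y, f y * (K x y - K x ybar) := by
      have hsub : (fun y => f y * (K x y - K x ybar))
          = fun y => f y * K x y - f y * K x ybar := funext fun y => mul_sub _ _ _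
      rw [hsub, integral_sub hfKi (hfi.mul_const _), integral_mul_const, hfint,
        zero_mul, sub_zero]
    have hGx : Measurable (G x) := by
      apply measurable_prod3
      intro ℓ
      simp only [hG]
      apply Measurable.fun_mul
      · exact (hfm.comp measurable_fst).nnnorm.coe_nnreal_ennreal
      · apply Measurable.fun_mul
        · exact ((PiLp.continuous_apply 2 (fun _ : Fin n => ℝ) ℓ |>.comp
            (continuous_fst.sub continuous_const)).measurable).nnnorm.coe_nnreal_ennreal
        · exact (((hD (e ℓ)).comp
            (measurable_const.prodMk hccont.measurable)).nnnorm).coe_nnreal_ennreal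
    have hmvt : ∀ y, (‖K x y - K x ybar‖₊ : ℝ≥0∞)
        ≤ ∫⁻ t in Ioc (0:ℝ) 1, (‖fderiv ℝ (K x) (c y t) (y - ybar)‖₊ : ℝ≥0∞) := by
      intro y
      have hder : ∀ t : ℝ, HasDerivAt (fun s => K x (c y s))
          (fderiv ℝ (K x) (c y t) (y - ybar)) t := by
        intro t
        have hli : HasDerivAt (fun s : ℝ => c y s) (y - ybar) t := by
          simpa [hc] using ((hasDerivAt_id t).smul_const (y - ybar)).const_add ybar
        exact (((hKd x).differentiable one_ne_zero) (c y t)).hasFDerivAt.comp_hasDerivAt t hli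
      have hcont : Continuous fun t : ℝ => fderiv ℝ (K x) (c y t) (y - ybar) := by
        have h1 : Continuous fun p : Euc n × Euc n => fderiv ℝ (K x) p.1 p.2 :=
          (hKd x).continuous_fderiv_apply one_ne_zero
        have h2 : Continuous fun t : ℝ => c y t :=
          hccont.comp (continuous_const.prodMk continuous_id)
        exact h1.comp (h2.prodMk continuous_const)
      have hftc : ∫ t in (0:ℝ)..1, fderiv ℝ (K x) (c y t) (y - ybar)
          = K x (c y 1) - K x (c y 0) :=
        intervalIntegral.integral_eq_sub_of_hasDerivAt (fun t _ => hder t)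
          (hcont.intervalIntegrable 0 1)
      have h01 : c y 1 = y := by rw [hc]; simp
      have h00 : c y 0 = ybar := by rw [hc]; simp
      have hKsub : K x y - K x ybar = ∫ t in Ioc (0:ℝ) 1,
          fderiv ℝ (K x) (c y t) (y - ybar) ∂volume := by
        rw [← intervalIntegral.integral_of_le zero_le_one, hftc, h01, h00]
      rw [hKsub]
      exact enorm_integral_le_lintegral_enorm _
    have hdir : ∀ (w u : Euc n), (‖fderiv ℝ (K x) w u‖₊ : ℝ≥0∞)
        ≤ ∑ ℓ : Fin n, (‖u ℓ‖₊ : ℝ≥0∞) * (‖fderiv ℝ (K x) w (e ℓ)‖₊ : ℝ≥0∞) := by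
      intro w u
      rw [euc_decomp (fderiv ℝ (K x) w) u]
      calc (‖∑ ℓ : Fin n, (u ℓ) • fderiv ℝ (K x) w (EuclideanSpace.single ℓ 1)‖₊ : ℝ≥0∞)
          ≤ ∑ ℓ : Fin n, (‖(u ℓ) • fderiv ℝ (K x) w (EuclideanSpace.single ℓ 1)‖₊ : ℝ≥0∞) := by
            rw [← ENNReal.coe_finset_sum]
            exact ENNReal.coe_le_coe.2 (nnnorm_sum_le _ _)
        _ = ∑ ℓ : Fin n, (‖u ℓ‖₊ : ℝ≥0∞) * (‖fderiv ℝ (K x) w (e ℓ)‖₊ : ℝ≥0∞) := by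
            refine Finset.sum_congr rfl fun ℓ _ => ?_
            rw [nnnorm_smul, ENNReal.coe_mul, he]
    have hyb : ∀ y, (‖f y‖₊ : ℝ≥0∞) * (‖K x y - K x ybar‖₊ : ℝ≥0∞)
        ≤ ∫⁻ t in Ioc (0:ℝ) 1, ∑ ℓ : Fin n, G x (y, t, ℓ) ∂volume := by
      intro y
      calc (‖f y‖₊ : ℝ≥0∞) * (‖K x y - K x ybar‖₊ : ℝ≥0∞)
          ≤ (‖f y‖₊ : ℝ≥0∞) * ∫⁻ t in Ioc (0:ℝ) 1,
              (‖fderiv ℝ (K x) (c y t) (y - ybar)‖₊ : ℝ≥0∞) ∂volume :=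
            mul_le_mul_right (hmvt y) _
        _ ≤ (‖f y‖₊ : ℝ≥0∞) * ∫⁻ t in Ioc (0:ℝ) 1, ∑ ℓ : Fin n,
              (‖(y - ybar) ℓ‖₊ : ℝ≥0∞) * (‖fderiv ℝ (K x) (c y t) (e ℓ)‖₊ : ℝ≥0∞) ∂volume :=
            mul_le_mul_right (lintegral_mono fun t => hdir (c y t) (y - ybar)) _
        _ = ∫⁻ t in Ioc (0:ℝ) 1, ∑ ℓ : Fin n, G x (y, t, ℓ) ∂volume := by
            rw [← lintegral_const_mul' _ _ ENNReal.coe_ne_top]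
            refine lintegral_congr fun t => ?_
            rw [Finset.mul_sum]
    calc (‖∫ y, f y * K x y‖₊ : ℝ≥0∞)
        = (‖∫ y, f y * (K x y - K x ybar)‖₊ : ℝ≥0∞) := by rw [hcancel]
      _ ≤ ∫⁻ y, (‖f y * (K x y - K x ybar)‖₊ : ℝ≥0∞) :=
          enorm_integral_le_lintegral_enorm _
      _ = ∫⁻ y, (‖f y‖₊ : ℝ≥0∞) * (‖K x y - K x ybar‖₊ : ℝ≥0∞) := by
          simp_rw [nnnorm_mul, ENNReal.coe_mul]
      _ ≤ ∫⁻ y, ∫⁻ t in Ioc (0:ℝ) 1, ∑ ℓ : Fin n, G x (y, t, ℓ) ∂volume ∂volume :=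
          lintegral_mono hyb
      _ = ∫⁻ ω, G x ω ∂ρ := by
          have hout : ∫⁻ ω, G x ω ∂ρ
              = ∫⁻ y, ∫⁻ t in Ioc (0:ℝ) 1, ∑ ℓ : Fin n, G x (y, t, ℓ) ∂volume ∂volume := by
            rw [hρ, lintegral_prod _ hGx.aemeasurable]
            refine lintegral_congr fun y => ?_
            have hsec : Measurable fun z : ℝ × Fin n => G x (y, z) := by
              apply measurable_from_prod_countable_left
              intro ℓ
              simp only [hG]
              exact (((hD (e ℓ)).comp (measurable_const.prodMk
                ((hccont.comp (continuous_const.prodMk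
                  continuous_id)).measurable))).nnnorm.coe_nnreal_ennreal.const_mul
                    _).const_mul _
            rw [lintegral_prod _ hsec.aemeasurable]
            rw [hν]
            refine lintegral_congr fun t => ?_
            rw [lintegral_count, tsum_fintype]
          rw [hout]
  have claim2 : ∀ ω : Euc n × ℝ × Fin n,
      (∫⁻ x, (G x ω) ^ (2:ℝ)) ^ (1/2:ℝ)
        ≤ (‖f ω.1‖₊ : ℝ≥0∞) * (‖(ω.1 - ybar) ω.2.2‖₊ : ℝ≥0∞) * ENNReal.ofReal M := by
    rintro ⟨y, t, ℓ⟩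
    set a : ℝ≥0∞ := (‖f y‖₊ : ℝ≥0∞) with ha
    set b : ℝ≥0∞ := (‖(y - ybar) ℓ‖₊ : ℝ≥0∞) with hb
    set w : Euc n := c y t with hw
    set g : Euc n → ℝ≥0∞ := fun x => (‖fderiv ℝ (K x) w (e ℓ)‖₊ : ℝ≥0∞) with hg
    have hgm : Measurable g := by
      apply Measurable.coe_nnreal_ennreal
      apply Measurable.nnnorm
      exact (hD (e ℓ)).comp (measurable_id.prodMk measurable_const)
    have habt : a * b ≠ ⊤ := ENNReal.mul_ne_top ENNReal.coe_ne_top ENNReal.coe_ne_top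
    have e1 : ∀ x, (G x (y, t, ℓ)) ^ (2:ℝ) = (a*b) ^ (2:ℝ) * (g x) ^ (2:ℝ) := by
      intro x
      rw [hG]
      dsimp only
      rw [← mul_assoc, ENNReal.mul_rpow_of_nonneg _ _ (by norm_num)]
    simp_rw [e1]
    rw [lintegral_const_mul' _ _ (ENNReal.rpow_ne_top_of_nonneg (by norm_num) habt),
      ENNReal.mul_rpow_of_nonneg _ _ (by norm_num : (0:ℝ) ≤ 1/2), ← ENNReal.rpow_mul]
    have h21 : (2 * (1/2) : ℝ) = 1 := by norm_num
    rw [h21, ENNReal.rpow_one, mul_assoc]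
    have e2 : (∫⁻ x, (g x) ^ (2:ℝ)) ^ (1/2:ℝ)
        = eLpNorm (fun x : Euc n => fderiv ℝ (K x) w (e ℓ)) 2 volume := by
      have h2t : (2:ℝ≥0∞).toReal = (2:ℝ) := by simp
      rw [eLpNorm_eq_lintegral_rpow_enorm_toReal two_ne_zero ENNReal.ofNat_ne_top, h2t]
      rfl
    rw [mul_assoc]
    apply mul_le_mul_right
    apply mul_le_mul_right
    exact le_trans (le_of_eq e2) (hKder ℓ w)
  have claim3 : ∫⁻ ω, ((‖f ω.1‖₊ : ℝ≥0∞) * (‖(ω.1 - ybar) ω.2.2‖₊ : ℝ≥0∞)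
        * ENNReal.ofReal M) ∂ρ
      ≤ ENNReal.ofReal ((n * (volume (Metric.ball (0:Euc n) 1)).toReal + 1) * M * r) := by
    set q : ℝ≥0∞ := ENNReal.ofReal (r ^ (-(n:ℝ)) * r) with hq
    have hpt : ∀ ω : Euc n × ℝ × Fin n,
        (‖f ω.1‖₊ : ℝ≥0∞) * (‖(ω.1 - ybar) ω.2.2‖₊ : ℝ≥0∞) * ENNReal.ofReal M
          ≤ S.indicator (fun _ => q) ω.1 * ENNReal.ofReal M := by
      rintro ⟨y, t, ℓ⟩
      apply mul_le_mul_left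
      by_cases hy : y ∈ S
      · rw [indicator_of_mem hy]
        have h1 : (‖f y‖₊ : ℝ≥0∞) ≤ ENNReal.ofReal (r ^ (-(n:ℝ))) := by
          rw [← ENNReal.ofReal_coe_nnreal, coe_nnnorm]
          exact ENNReal.ofReal_le_ofReal (hfb y)
        have h2 : (‖(y - ybar) ℓ‖₊ : ℝ≥0∞) ≤ ENNReal.ofReal r := by
          rw [← ENNReal.ofReal_coe_nnreal, coe_nnnorm]
          apply ENNReal.ofReal_le_ofReal
          calc ‖(y - ybar) ℓ‖ = |(y - ybar) ℓ| := Real.norm_eq_abs _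
            _ ≤ ‖y - ybar‖ := euc_abs_le _ _
            _ ≤ r := by simpa [hS, Metric.mem_closedBall, dist_eq_norm] using hy
        calc (‖f y‖₊ : ℝ≥0∞) * (‖(y - ybar) ℓ‖₊ : ℝ≥0∞)
            ≤ ENNReal.ofReal (r ^ (-(n:ℝ))) * ENNReal.ofReal r := mul_le_mul' h1 h2
          _ = q := by rw [hq, ENNReal.ofReal_mul (by positivity)]
      · rw [indicator_of_notMem hy]
        have : f y = 0 := by
          by_contra h
          exact hy (hsupp' (Function.mem_support.2 h))
        simp [this]
    set V : ℝ≥0∞ := volume (Metric.ball (0:Euc n) 1) with hV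
    have hVne : V ≠ ⊤ := measure_ball_lt_top.ne
    set F : Euc n → ℝ≥0∞ := fun y => S.indicator (fun _ => q) y * ENNReal.ofReal M with hF
    have hFm : Measurable F :=
      (measurable_const.indicator (measurableSet_closedBall)).mul_const _
    have hcu : (ν.prod (Measure.count : Measure (Fin n))) univ = (n : ℝ≥0∞) := by
      rw [← univ_prod_univ, Measure.prod_prod, hν, Measure.restrict_apply_univ,
        Real.volume_Ioc, Measure.count_univ]
      simp
    have hSvol : volume S = ENNReal.ofReal (r ^ (n:ℕ)) * V := by
      rw [hS, hV, Measure.addHaar_closedBall _ _ hr.le, finrank_euclideanSpace_fin]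
    have hmain : ∫⁻ ω, F ω.1 ∂ρ = q * (ENNReal.ofReal (r ^ (n:ℕ)) * V) * ENNReal.ofReal M * n := by
      have hFm1 : Measurable fun ω : Euc n × ℝ × Fin n => F ω.1 := hFm.comp measurable_fst
      rw [hρ, lintegral_prod _ hFm1.aemeasurable]
      simp_rw [lintegral_const, hcu]
      rw [lintegral_mul_const' _ _ (by simp : (n : ℝ≥0∞) ≠ ⊤), hF]
      rw [lintegral_mul_const' _ _ ENNReal.ofReal_ne_top,
        lintegral_indicator_const (measurableSet_closedBall), hSvol]
    have harith : q * (ENNReal.ofReal (r ^ (n:ℕ)) * V) * ENNReal.ofReal M * n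
        ≤ ENNReal.ofReal ((n * V.toReal + 1) * M * r) := by
      have hq1 : (r ^ (-(n:ℝ)) * r) * r ^ (n:ℕ) = r := by
        rw [← Real.rpow_natCast r n]
        rw [mul_comm (r ^ (-(n:ℝ))) r, mul_assoc, ← Real.rpow_add hr]
        simp
      have hVr : V = ENNReal.ofReal V.toReal := (ENNReal.ofReal_toReal hVne).symm
      calc q * (ENNReal.ofReal (r ^ (n:ℕ)) * V) * ENNReal.ofReal M * n
          = (q * ENNReal.ofReal (r ^ (n:ℕ))) * ENNReal.ofReal V.toReal
              * ENNReal.ofReal M * ENNReal.ofReal n := by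
            rw [← hVr]; push_cast [ENNReal.ofReal_natCast]; ring
        _ = ENNReal.ofReal (r * V.toReal * M * n) := by
            rw [hq, ← ENNReal.ofReal_mul (by positivity), hq1,
              ← ENNReal.ofReal_mul (by positivity), ← ENNReal.ofReal_mul (by positivity),
              ← ENNReal.ofReal_mul (by positivity)]
        _ ≤ ENNReal.ofReal ((n * V.toReal + 1) * M * r) := by
            apply ENNReal.ofReal_le_ofReal
            have hVt : 0 ≤ V.toReal := ENNReal.toReal_nonneg
            nlinarith [mul_nonneg (mul_nonneg hVt hM) hr.le, mul_nonneg hM hr.le]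
    calc ∫⁻ ω, ((‖f ω.1‖₊ : ℝ≥0∞) * (‖(ω.1 - ybar) ω.2.2‖₊ : ℝ≥0∞)
            * ENNReal.ofReal M) ∂ρ
        ≤ ∫⁻ ω, F ω.1 ∂ρ := lintegral_mono hpt
      _ = q * (ENNReal.ofReal (r ^ (n:ℕ)) * V) * ENNReal.ofReal M * n := hmain
      _ ≤ ENNReal.ofReal ((n * V.toReal + 1) * M * r) := harith
  calc eLpNorm (fun x : Euc n => ∫ y : Euc n, f y * K x y) 2 volume
      = (∫⁻ x, (‖∫ y : Euc n, f y * K x y‖₊ : ℝ≥0∞) ^ (2:ℝ)) ^ (1/2:ℝ) := by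
        rw [eLpNorm_eq_lintegral_rpow_enorm_toReal two_ne_zero ENNReal.ofNat_ne_top]
        norm_num
        rfl
    _ ≤ (∫⁻ x, (∫⁻ ω, G x ω ∂ρ) ^ (2:ℝ)) ^ (1/2:ℝ) := by
        apply ENNReal.rpow_le_rpow _ (by norm_num)
        exact lintegral_mono fun x => ENNReal.rpow_le_rpow (claim1 x) (by norm_num)
    _ ≤ ∫⁻ ω, (∫⁻ x, (G x ω) ^ (2:ℝ)) ^ (1/2:ℝ) ∂ρ := mink2 volume ρ hGm
    _ ≤ ∫⁻ ω, ((‖f ω.1‖₊ : ℝ≥0∞) * (‖(ω.1 - ybar) ω.2.2‖₊ : ℝ≥0∞)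
          * ENNReal.ofReal M) ∂ρ := lintegral_mono claim2
    _ ≤ _ := claim3
end
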